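/- Let S be a semigroup and a, d ∈ S. If ad L d and the H-class of ad is a group, then da R d and the H-class of da is a group. -/
import Mathlib


variable {S : Type*} [Semigroup S]

/-- `x` is below `y` in the L-preorder: `x ∈ S¹y`. -/
def lle (x y : S) : Prop := x = y ∨ ∃ s, x = s * y
/-- `x` is below `y` in the R-preorder: `x ∈ yS¹`. -/
def rle (x y : S) : Prop := x = y ∨ ∃ s, x = y * s
/-- Green's L relation: `S¹x = S¹y`. -/
def lrel (x y : S) : Prop := lle x y ∧ lle y x
/-- Green's R relation: `xS¹ = yS¹`. -/
def rrel (x y : S) : Prop := rle x y ∧ rle y x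
/-- Green's H relation. -/
def hrel (x y : S) : Prop := lrel x y ∧ rrel x y
/-- `b` is an inverse of `a` along `d`. -/
def invAlong (a d b : S) : Prop :=
  b * a * d = d ∧ d * a * b = d ∧ (∃ s, b = d * s) ∧ (∃ t, b = t * d)
/-- The H-class of `x`. -/
def hClass (x : S) : Set S := {y | hrel y x}
/-- A subset of `S` is a group under the restricted multiplication. -/
def isGroupSet (H : Set S) : Prop :=
  (∀ x ∈ H, ∀ y ∈ H, x * y ∈ H) ∧
  ∃ e ∈ H, (∀ x ∈ H, e * x = x ∧ x * e = x) ∧ ∀ x ∈ H, ∃ y ∈ H, x * y = e ∧ y * x = e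

lemma lle_trans' {x y z : S} (h1 : lle x y) (h2 : lle y z) : lle x z := by
  rcases h1 with rfl | ⟨s, rfl⟩
  · exact h2
  · rcases h2 with rfl | ⟨t, rfl⟩
    · exact Or.inr ⟨s, rfl⟩
    · exact Or.inr ⟨s * t, (mul_assoc s t z).symm⟩

lemma rle_trans' {x y z : S} (h1 : rle x y) (h2 : rle y z) : rle x z := by
  rcases h1 with rfl | ⟨s, rfl⟩
  · exact h2
  · rcases h2 with rfl | ⟨t, rfl⟩
    · exact Or.inr ⟨s, rfl⟩
    · exact Or.inr ⟨t * s, mul_assoc z t s⟩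

lemma hrel_refl' (x : S) : hrel x x :=
  ⟨⟨Or.inl rfl, Or.inl rfl⟩, ⟨Or.inl rfl, Or.inl rfl⟩⟩

lemma hrel_trans' {x y z : S} (h1 : hrel x y) (h2 : hrel y z) : hrel x z :=
  ⟨⟨lle_trans' h1.1.1 h2.1.1, lle_trans' h2.1.2 h1.1.2⟩,
   ⟨rle_trans' h1.2.1 h2.2.1, rle_trans' h2.2.2 h1.2.2⟩⟩

lemma hrel_symm' {x y : S} (h : hrel x y) : hrel y x :=
  ⟨⟨h.1.2, h.1.1⟩, ⟨h.2.2, h.2.1⟩⟩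

lemma hClass_eq' {x y : S} (h : hrel x y) : hClass x = hClass y := by
  ext z
  exact ⟨fun hz => hrel_trans' hz h, fun hz => hrel_trans' hz (hrel_symm' h)⟩

/-- Green's theorem: the H-class of an idempotent is a group. -/
lemma green' (e : S) (he : e * e = e) : isGroupSet (hClass e) := by
  have idl : ∀ x ∈ hClass e, e * x = x := by
    rintro x ⟨_, hx, _⟩
    rcases hx with rfl | ⟨s, rfl⟩
    · exact he
    · rw [← mul_assoc, he]
  have idr : ∀ x ∈ hClass e, x * e = x := by
    rintro x ⟨⟨hx, _⟩, _⟩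
    rcases hx with rfl | ⟨s, rfl⟩
    · exact he
    · rw [mul_assoc, he]
  have inv : ∀ x ∈ hClass e, ∃ y ∈ hClass e, x * y = e ∧ y * x = e := by
    intro x hx
    have hxe : x * e = x := idr x hx
    have hex : e * x = x := idl x hx
    obtain ⟨⟨hl1, hl2⟩, ⟨hr1, hr2⟩⟩ := hx
    obtain ⟨s, hs⟩ : ∃ s, x * s = e := by
      rcases hr2 with h | ⟨s, hs⟩
      · exact ⟨e, by rw [h] at hxe ⊢; exact hxe⟩
      · exact ⟨s, hs.symm⟩
    obtain ⟨t, ht⟩ : ∃ t, t * x = e := by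
      rcases hl2 with h | ⟨t, ht⟩
      · exact ⟨e, by rw [h] at hex ⊢; exact hex⟩
      · exact ⟨t, ht.symm⟩
    have hte : t * e = e * s := by
      conv_lhs => rw [← hs]
      rw [← mul_assoc, ht]
    have hmul1 : x * (e * s) = e := by rw [← mul_assoc, hxe, hs]
    have hmul2 : (e * s) * x = e := by rw [← hte, mul_assoc, hex, ht]
    refine ⟨e * s, ⟨⟨Or.inr ⟨t, hte.symm⟩, Or.inr ⟨x, hmul1.symm⟩⟩,
      ⟨Or.inr ⟨s, rfl⟩, Or.inr ⟨x, hmul2.symm⟩⟩⟩, hmul1, hmul2⟩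
  have closure : ∀ x ∈ hClass e, ∀ y ∈ hClass e, x * y ∈ hClass e := by
    intro x hx y hy
    obtain ⟨x', hx', hx1, hx2⟩ := inv x hx
    obtain ⟨y', hy', hy1, hy2⟩ := inv y hy
    refine ⟨⟨Or.inr ⟨x * y, ?_⟩, Or.inr ⟨y' * x', ?_⟩⟩,
      ⟨Or.inr ⟨x * y, ?_⟩, Or.inr ⟨y' * x', ?_⟩⟩⟩
    · rw [mul_assoc, idr y hy]
    · rw [mul_assoc, ← mul_assoc x' x y, hx2, idl y hy, hy2]
    · rw [← mul_assoc, idl x hx]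
    · rw [mul_assoc, ← mul_assoc y y' x', hy1, idl x' hx', hx1]
  exact ⟨closure, e, hrel_refl' e, fun x hx => ⟨idl x hx, idr x hx⟩, inv⟩

theorem stmt9 (a d : S) (h1 : lrel (a * d) d) (h2 : isGroupSet (hClass (a * d))) :
    rrel (d * a) d ∧ isGroupSet (hClass (d * a)) := by
  obtain ⟨hcl, e, heH, hid, hinv⟩ := h2
  have hee : e * e = e := (hid e heH).1
  obtain ⟨c, hcH, hc1, hc2⟩ := hinv (a * d) (hrel_refl' (a * d))
  -- d * e = d
  have hde : d * e = d := by
    have hle : lle d e := lle_trans' h1.2 heH.1.2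
    rcases hle with h | ⟨t, ht⟩
    · rw [h]; exact hee
    · rw [ht, mul_assoc, hee]
  -- c is a left multiple of d
  obtain ⟨t, htc⟩ : ∃ t, c = t * d := by
    rcases hcH.1.1 with h | ⟨s, hs⟩
    · exact ⟨a, h⟩
    · exact ⟨s * a, by rw [hs, mul_assoc]⟩
  set b := d * c with hb
  have key1 : b * a * d = d := by
    rw [hb, mul_assoc d c a, mul_assoc d (c * a) d, mul_assoc c a d, hc2, hde]
  have key2 : d * a * b = d := by
    rw [hb, ← mul_assoc (d * a) d c, mul_assoc d a d, mul_assoc d (a * d) c, hc1, hde]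
  have hbtd : ∃ t', b = t' * d := ⟨d * t, by rw [hb, htc, ← mul_assoc]⟩
  obtain ⟨t', hbt'⟩ := hbtd
  -- b * a * b = b
  have bab : b * a * b = b := by
    conv_lhs => rw [hb, ← mul_assoc (b * a) d c, key1]
  -- f := b * a is idempotent
  have hff : (b * a) * (b * a) = b * a := by
    rw [← mul_assoc (b * a) b a, bab]
  -- rrel (d * a) d
  have hrr : rrel (d * a) d := ⟨Or.inr ⟨a, rfl⟩, Or.inr ⟨b, key2.symm⟩⟩
  -- hrel (b * a) (d * a)
  have hba_da : hrel (b * a) (d * a) := by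
    refine ⟨⟨Or.inr ⟨t', by rw [hbt', mul_assoc]⟩,
      Or.inr ⟨d * a, by rw [← mul_assoc, key2]⟩⟩, ?_, ?_⟩
    · exact rle_trans' (Or.inr ⟨c * a, by rw [hb, mul_assoc]⟩) hrr.2
    · exact rle_trans' hrr.1 (Or.inr ⟨d, key1.symm⟩)
  refine ⟨hrr, ?_⟩
  rw [hClass_eq' (hrel_symm' hba_da)]
  exact green' (b * a) hff
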